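/- arXiv:0906.3206 — 2 statements merged into one kernel-verified Lean document; each statement's English description precedes it below -/
import Mathlib

section
/- Let H = H^{1,2}(D,ℂ) and for nonzero u ∈ H let P_u h = h − (Re⟨u,h⟩_{L²} / Re⟨u,Mu⟩_{L²})·Mu be the projection onto null(β'(u)). Suppose (u_n) is a sequence in H converging in L² to u ≠ 0 with u ∈ H. Then P_{u_n} → P_u in the operator norm of L(H,H), and moreover there exists a constant m (depending on u and bounds on the sequence) such that ‖P_{u_n} − P_u‖_{L(H,H)} ≤ m‖u_n − u‖_{L²}. -/
open Filter

local notation "⟪" x ", " y "⟫" => @inner ℂ _ _ x y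

private lemma re_inner_abs_le {E : Type*} [NormedAddCommGroup E] [InnerProductSpace ℂ E]
    (x y : E) : |(⟪x, y⟫).re| ≤ ‖x‖ * ‖y‖ :=
  calc |(⟪x, y⟫).re| ≤ ‖⟪x, y⟫‖ := Complex.abs_re_le_norm _
    _ = ‖⟪x, y⟫‖ := rfl
    _ ≤ ‖x‖ * ‖y‖ := norm_inner_le_norm _ _

private lemma arith_aux (R c x y : ℝ) (hc : c ≠ 0) :
    ((R * y * (2 * R * x) + x * y * c) / (c ^ 2 / 2)) * R + ((R * y) / (c / 2)) * x
      = (4 * R ^ 3 / c ^ 2 + 4 * R / c) * (x * y) := by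
  field_simp; ring

private lemma key_est {H L2 : Type*}
    [NormedAddCommGroup H] [InnerProductSpace ℂ H]
    [NormedAddCommGroup L2] [InnerProductSpace ℂ L2]
    (ι : H →L[ℂ] L2) (hι_norm : ∀ v : H, ‖ι v‖ ≤ ‖v‖)
    (M : L2 →L[ℂ] H) (hMle : ∀ x : L2, ‖M x‖ ≤ ‖x‖)
    (v f : L2) (R c : ℝ) (hRv : ‖v‖ ≤ R) (hRf : ‖f‖ ≤ R)
    (hc : c = ‖M v‖ ^ 2) (hc0 : 0 < c) (hd : c / 2 ≤ ‖M f‖ ^ 2) (h : H) :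
    ‖((⟪v, ι h⟫).re / c) • M v - ((⟪f, ι h⟫).re / ‖M f‖ ^ 2) • M f‖ ≤
      (4 * R ^ 3 / c ^ 2 + 4 * R / c) * (‖f - v‖ * ‖h‖) := by
  set s : ℝ := (⟪v, ι h⟫).re with hs_def
  set t : ℝ := (⟪f, ι h⟫).re with ht_def
  set d : ℝ := ‖M f‖ ^ 2 with hd_def
  set x : ℝ := ‖f - v‖ with hx_def
  set y : ℝ := ‖h‖ with hy_def
  have hx0 : 0 ≤ x := norm_nonneg _
  have hy0 : 0 ≤ y := norm_nonneg _
  have hR0 : 0 ≤ R := le_trans (norm_nonneg v) hRv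
  have hd0 : 0 < d := lt_of_lt_of_le (by linarith) hd
  have hA : ‖M v‖ ≤ R := (hMle v).trans hRv
  have hB : ‖M f‖ ≤ R := (hMle f).trans hRf
  have hBA : ‖M f - M v‖ ≤ x := by rw [← map_sub]; exact hMle _
  have hs : |s| ≤ R * y := by
    refine (re_inner_abs_le v (ι h)).trans ?_
    exact mul_le_mul hRv (hι_norm h) (norm_nonneg _) hR0
  have ht : |t| ≤ R * y := by
    refine (re_inner_abs_le f (ι h)).trans ?_
    exact mul_le_mul hRf (hι_norm h) (norm_nonneg _) hR0
  have hst : |s - t| ≤ x * y := by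
    have e : s - t = (⟪v - f, ι h⟫).re := by
      rw [inner_sub_left, Complex.sub_re]
    rw [e]
    refine (re_inner_abs_le (v - f) (ι h)).trans ?_
    have : ‖v - f‖ = x := by rw [hx_def, norm_sub_rev]
    rw [this]
    exact mul_le_mul_of_nonneg_left (hι_norm h) hx0
  have hdiffnorm : |‖M f‖ - ‖M v‖| ≤ x := (abs_norm_sub_norm_le _ _).trans hBA
  have hdc : |d - c| ≤ 2 * R * x := by
    rw [hd_def, hc, abs_le]
    obtain ⟨h1, h2⟩ := abs_le.mp hdiffnorm
    constructor <;> nlinarith [norm_nonneg (M f), norm_nonneg (M v)]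
  have hsplit : (s / c) • M v - (t / d) • M f
      = (s / c - t / d) • M v + (t / d) • (M v - M f) := by module
  have e1 : s / c - t / d = (s * (d - c) + (s - t) * c) / (c * d) := by
    field_simp; ring
  have hnumnn : (0:ℝ) ≤ R * y * (2 * R * x) + x * y * c := by
    nlinarith [mul_nonneg hR0 hy0, mul_nonneg hR0 hx0, mul_nonneg hx0 hy0]
  have h2 : |s / c - t / d| ≤ (R * y * (2 * R * x) + x * y * c) / (c ^ 2 / 2) := by
    rw [e1, abs_div, abs_of_pos (mul_pos hc0 hd0)]
    refine div_le_div₀ hnumnn ?_ (by positivity) (by nlinarith)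
    refine (abs_add_le _ _).trans ?_
    rw [abs_mul, abs_mul, abs_of_pos hc0]
    exact add_le_add (mul_le_mul hs hdc (abs_nonneg _) (mul_nonneg hR0 hy0))
      (mul_le_mul_of_nonneg_right hst hc0.le)
  have h3 : |t / d| ≤ (R * y) / (c / 2) := by
    rw [abs_div, abs_of_pos hd0]
    exact div_le_div₀ (mul_nonneg hR0 hy0) ht (by linarith) hd
  have hb2 : (0:ℝ) ≤ (R * y * (2 * R * x) + x * y * c) / (c ^ 2 / 2) :=
    div_nonneg hnumnn (by positivity)
  calc ‖(s / c) • M v - (t / d) • M f‖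
      ≤ |s / c - t / d| * ‖M v‖ + |t / d| * ‖M v - M f‖ := by
        rw [hsplit]
        refine (norm_add_le _ _).trans ?_
        rw [norm_smul, norm_smul, Real.norm_eq_abs, Real.norm_eq_abs]
    _ ≤ ((R * y * (2 * R * x) + x * y * c) / (c ^ 2 / 2)) * R
        + ((R * y) / (c / 2)) * x := by
        have hMvMf : ‖M v - M f‖ ≤ x := by rw [norm_sub_rev]; exact hBA
        exact add_le_add (mul_le_mul h2 hA (norm_nonneg _) hb2)
          (mul_le_mul h3 hMvMf (norm_nonneg _) (div_nonneg (mul_nonneg hR0 hy0) (by linarith)))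
    _ = (4 * R ^ 3 / c ^ 2 + 4 * R / c) * (x * y) := arith_aux R c x y hc0.ne'

theorem projections_converge_in_operator_norm
    {H L2 : Type*}
    [NormedAddCommGroup H] [InnerProductSpace ℂ H] [CompleteSpace H]
    [NormedAddCommGroup L2] [InnerProductSpace ℂ L2] [CompleteSpace L2]
    (ι : H →L[ℂ] L2) (hι_inj : Function.Injective ι) (hι_norm : ∀ v : H, ‖ι v‖ ≤ ‖v‖)
    (M : L2 →L[ℂ] H) (hM_inj : Function.Injective M) (hM_norm : ‖M‖ ≤ 1)
    (hM : ∀ (h : H) (f : L2), (⟪ι h, f⟫).re = (⟪h, M f⟫).re)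
    (u : H) (hu : u ≠ 0) (un : ℕ → H) (hun : ∀ n, un n ≠ 0)
    (hconv : Tendsto (fun n => ι (un n)) atTop (nhds (ι u)))
    (P : H →L[ℝ] H)
    (hP : ∀ h : H, P h = h - ((⟪ι u, ι h⟫).re / (⟪ι u, ι (M (ι u))⟫).re) • M (ι u))
    (Pn : ℕ → (H →L[ℝ] H))
    (hPn : ∀ (n : ℕ) (h : H), Pn n h =
      h - ((⟪ι (un n), ι h⟫).re / (⟪ι (un n), ι (M (ι (un n)))⟫).re) • M (ι (un n))) :
    Tendsto Pn atTop (nhds P) ∧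
    ∃ m : ℝ, ∀ n : ℕ, ‖Pn n - P‖ ≤ m * ‖ι (un n) - ι u‖ := by
  classical
  have hMle : ∀ x : L2, ‖M x‖ ≤ ‖x‖ := by
    intro x
    refine (M.le_opNorm x).trans ?_
    nlinarith [norm_nonneg x]
  -- denominators are ‖M x‖²
  have hden : ∀ x : L2, (⟪x, ι (M x)⟫).re = ‖M x‖ ^ 2 := by
    intro x
    have e1 : (⟪x, ι (M x)⟫).re = (⟪ι (M x), x⟫).re := by
      rw [← inner_conj_symm]; exact Complex.conj_re _
    rw [e1, hM (M x) x]
    have := @inner_self_eq_norm_sq ℂ H _ _ _ (M x)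
    simpa using this
  have hv0 : ι u ≠ 0 := fun hvv => hu (hι_inj (by simpa using hvv))
  have hMv0 : M (ι u) ≠ 0 := fun hh => hv0 (hM_inj (by simpa using hh))
  set c : ℝ := ‖M (ι u)‖ ^ 2 with hcdef
  have hc0 : 0 < c := pow_pos (norm_pos_iff.mpr hMv0) 2
  set R : ℝ := ‖ι u‖ + 1 with hRdef
  have hRv : ‖ι u‖ ≤ R := by simp [hRdef]
  have hR0 : 0 < R := lt_of_lt_of_le (by positivity) (le_of_eq rfl)
  set C : ℝ := 4 * R ^ 3 / c ^ 2 + 4 * R / c with hCdef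
  have hC0 : 0 ≤ C := by
    have h1 : (0:ℝ) ≤ 4 * R ^ 3 := by positivity
    have h2 : (0:ℝ) ≤ 4 * R := by positivity
    exact add_nonneg (div_nonneg h1 (by positivity)) (div_nonneg h2 hc0.le)
  -- difference formula
  have hdiff : ∀ (n : ℕ) (h : H), (Pn n - P) h =
      ((⟪ι u, ι h⟫).re / c) • M (ι u)
        - ((⟪ι (un n), ι h⟫).re / ‖M (ι (un n))‖ ^ 2) • M (ι (un n)) := by
    intro n h
    rw [ContinuousLinearMap.sub_apply, hPn n h, hP h, hden, hden]
    abel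
  -- the key estimate for "good" n
  have key : ∀ n : ℕ, ‖ι (un n)‖ ≤ R → c / 2 ≤ ‖M (ι (un n))‖ ^ 2 →
      ‖Pn n - P‖ ≤ C * ‖ι (un n) - ι u‖ := by
    intro n hRn hdn
    refine ContinuousLinearMap.opNorm_le_bound _ (mul_nonneg hC0 (norm_nonneg _)) ?_
    intro h
    rw [hdiff n h]
    have := key_est ι hι_norm M hMle (ι u) (ι (un n)) R c hRv hRn rfl hc0 hdn h
    calc _ ≤ C * (‖ι (un n) - ι u‖ * ‖h‖) := this
      _ = C * ‖ι (un n) - ι u‖ * ‖h‖ := by ring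
  -- |‖M f‖² − c| bound
  have hdcb : ∀ f : L2, ‖f‖ ≤ R → |‖M f‖ ^ 2 - c| ≤ 2 * R * ‖f - ι u‖ := by
    intro f hf
    have hBA : ‖M f - M (ι u)‖ ≤ ‖f - ι u‖ := by rw [← map_sub]; exact hMle _
    have h1 := (abs_norm_sub_norm_le (M f) (M (ι u))).trans hBA
    obtain ⟨ha, hb⟩ := abs_le.mp h1
    have hA : ‖M (ι u)‖ ≤ R := (hMle _).trans hRv
    have hBn : ‖M f‖ ≤ R := (hMle _).trans hf
    rw [hcdef, abs_le]
    constructor <;> nlinarith [norm_nonneg (M f), norm_nonneg (M (ι u))]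
  -- eventually good
  have hε : (0:ℝ) < min 1 (c / (4 * R)) := lt_min one_pos (by positivity)
  obtain ⟨N, hN⟩ := Metric.tendsto_atTop.mp hconv _ hε
  have hgood : ∀ n ≥ N, ‖Pn n - P‖ ≤ C * ‖ι (un n) - ι u‖ := by
    intro n hn
    have hd := hN n hn
    rw [dist_eq_norm] at hd
    have hd1 : ‖ι (un n) - ι u‖ ≤ 1 := le_of_lt (lt_of_lt_of_le hd (min_le_left _ _))
    have hd2 : ‖ι (un n) - ι u‖ ≤ c / (4 * R) :=
      le_of_lt (lt_of_lt_of_le hd (min_le_right _ _))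
    have hRn : ‖ι (un n)‖ ≤ R := by
      have := norm_sub_norm_le (ι (un n)) (ι u)
      rw [hRdef]; linarith
    refine key n hRn ?_
    have := hdcb (ι (un n)) hRn
    have h2 : |‖M (ι (un n))‖ ^ 2 - c| ≤ 2 * R * (c / (4 * R)) := by
      refine (this).trans ?_
      exact mul_le_mul_of_nonneg_left hd2 (by positivity)
    have h3 : 2 * R * (c / (4 * R)) = c / 2 := by field_simp; ring
    rw [h3] at h2
    obtain ⟨ha, hb⟩ := abs_le.mp h2
    linarith
  -- finite part
  have hfin : ∀ K : ℕ, ∃ m0 : ℝ, 0 ≤ m0 ∧ ∀ n < K, ‖Pn n - P‖ ≤ m0 * ‖ι (un n) - ι u‖ := by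
    intro K
    induction K with
    | zero => exact ⟨0, le_refl _, fun n hn => absurd hn (Nat.not_lt_zero n)⟩
    | succ k ih =>
      obtain ⟨m0, hm00, hm0⟩ := ih
      by_cases hz : ι (un k) = ι u
      · have huk : un k = u := hι_inj hz
        have hPk : Pn k = P := by
          ext h
          rw [hPn k h, hP h, huk]
        refine ⟨m0, hm00, fun n hn => ?_⟩
        rcases Nat.lt_succ_iff_lt_or_eq.mp hn with h' | h'
        · exact hm0 n h'
        · subst h'
          rw [hPk, sub_self, norm_zero]
          exact mul_nonneg hm00 (norm_nonneg _)
      · have ht0 : 0 < ‖ι (un k) - ι u‖ := by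
          rw [norm_pos_iff, sub_ne_zero]; exact hz
        refine ⟨max m0 (‖Pn k - P‖ / ‖ι (un k) - ι u‖),
          le_trans hm00 (le_max_left _ _), fun n hn => ?_⟩
        rcases Nat.lt_succ_iff_lt_or_eq.mp hn with h' | h'
        · exact (hm0 n h').trans
            (mul_le_mul_of_nonneg_right (le_max_left _ _) (norm_nonneg _))
        · subst h'
          rw [← div_le_iff₀ ht0]
          exact le_max_right _ _
  obtain ⟨m0, hm00, hm0⟩ := hfin N
  have hbound : ∀ n : ℕ, ‖Pn n - P‖ ≤ max C m0 * ‖ι (un n) - ι u‖ := by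
    intro n
    rcases lt_or_ge n N with h' | h'
    · exact (hm0 n h').trans
        (mul_le_mul_of_nonneg_right (le_max_right _ _) (norm_nonneg _))
    · exact (hgood n h').trans
        (mul_le_mul_of_nonneg_right (le_max_left _ _) (norm_nonneg _))
  constructor
  · rw [tendsto_iff_norm_sub_tendsto_zero]
    have htend : Tendsto (fun n => ‖ι (un n) - ι u‖) atTop (nhds 0) :=
      tendsto_iff_norm_sub_tendsto_zero.mp hconv
    have hmt : Tendsto (fun n => max C m0 * ‖ι (un n) - ι u‖) atTop (nhds 0) := by
      simpa using htend.const_mul (max C m0)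
    exact squeeze_zero (fun n => norm_nonneg _) hbound hmt
  · exact ⟨max C m0, hbound⟩
end

section
/- Let H be a Hilbert space and E : H → ℝ a C² function whose gradient u ↦ ∇E(u) is Lipschitz, and let u ↦ P_u be a Lipschitz map (in operator norm) from H to the bounded operators on H with each P_u an orthogonal projection. Given u₀ ∈ H, the initial value problem z(0) = u₀, z'(t) = −P_{z(t)}∇E(z(t)) has a unique solution z : [0,∞) → H defined for all t ≥ 0, provided E is bounded below. -/
open Set Metric
open scoped NNReal RealInnerProductSpace

lemma trunc_scalar {R x y : ℝ} (hR : 0 ≤ R) (hx : 0 ≤ x) (hy : 0 ≤ y) :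
    |min 1 (R / x) - min 1 (R / y)| * y ≤ |x - y| := by
  rcases hy.eq_or_lt with hy0 | hy0
  · rw [← hy0, mul_zero]; exact abs_nonneg _
  rcases hx.eq_or_lt with hx0 | hx0
  · rw [← hx0, div_zero, min_eq_right zero_le_one]
    have hb0 : 0 ≤ min 1 (R / y) := le_min zero_le_one (div_nonneg hR hy)
    have hb1 : min 1 (R / y) ≤ 1 := min_le_left _ _
    rw [zero_sub, abs_neg, abs_of_nonneg hb0, zero_sub, abs_neg, abs_of_nonneg hy]
    nlinarith
  rcases le_or_gt x R with h1 | h1 <;> rcases le_or_gt y R with h2 | h2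
  · rw [min_eq_left (by rw [le_div_iff₀ hx0]; linarith),
      min_eq_left (by rw [le_div_iff₀ hy0]; linarith)]
    simp [abs_nonneg]
  · -- x ≤ R < y
    rw [min_eq_left (by rw [le_div_iff₀ hx0]; linarith),
      min_eq_right (by rw [div_le_one hy0]; linarith)]
    rw [abs_of_nonneg (by rw [sub_nonneg, div_le_one hy0]; linarith),
      abs_of_nonpos (by linarith)]
    have h3 : (1 - R / y) * y = y - R := by field_simp
    rw [h3, neg_sub]; linarith
  · -- y ≤ R < x
    rw [min_eq_right (by rw [div_le_one hx0]; linarith),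
      min_eq_left (by rw [le_div_iff₀ hy0]; linarith)]
    rw [abs_of_nonpos (by rw [sub_nonpos, div_le_one hx0]; linarith),
      abs_of_nonneg (by linarith), neg_sub]
    rw [← mul_le_mul_iff_of_pos_right hx0]
    have key : (1 - R / x) * y * x = (x - R) * y := by field_simp
    rw [key]
    nlinarith [sq_nonneg (x - y), mul_le_mul_of_nonneg_left h2 hy]
  · -- R < x, R < y
    rw [min_eq_right (by rw [div_le_one hx0]; linarith),
      min_eq_right (by rw [div_le_one hy0]; linarith)]
    have h3 : R / x - R / y = R * (y - x) / (x * y) := by field_simp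
    rw [h3, abs_div, abs_mul, abs_of_nonneg hR, abs_of_pos (mul_pos hx0 hy0)]
    have h4 : R * |y - x| / (x * y) * y = R * |y - x| / x := by
      field_simp
    rw [h4, div_le_iff₀ hx0, abs_sub_comm y x]
    nlinarith [abs_nonneg (x - y)]


section helpers
variable {X : Type*} [NormedAddCommGroup X] [NormedSpace ℝ X]

/-- radial truncation to the closed ball of radius `R` -/
noncomputable def radTrunc (R : ℝ) (u : X) : X := min 1 (R / ‖u‖) • u

lemma radTrunc_eq_self {R : ℝ} {u : X} (h : ‖u‖ ≤ R) : radTrunc R u = u := by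
  rcases eq_or_ne u 0 with rfl | hu
  · simp [radTrunc]
  · rw [radTrunc, min_eq_left, one_smul]
    rw [le_div_iff₀ (norm_pos_iff.mpr hu), one_mul]; exact h

lemma norm_radTrunc_le_self {R : ℝ} (hR : 0 ≤ R) (u : X) : ‖radTrunc R u‖ ≤ ‖u‖ := by
  rw [radTrunc, norm_smul, Real.norm_eq_abs,
    abs_of_nonneg (le_min zero_le_one (div_nonneg hR (norm_nonneg u)))]
  nlinarith [min_le_left 1 (R / ‖u‖), norm_nonneg u]

lemma norm_radTrunc_le {R : ℝ} (hR : 0 ≤ R) (u : X) : ‖radTrunc R u‖ ≤ R := by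
  rcases eq_or_ne u 0 with rfl | hu
  · simpa [radTrunc] using hR
  have hu0 : (0:ℝ) < ‖u‖ := norm_pos_iff.mpr hu
  rw [radTrunc, norm_smul, Real.norm_eq_abs,
    abs_of_nonneg (le_min zero_le_one (div_nonneg hR (norm_nonneg u)))]
  calc min 1 (R / ‖u‖) * ‖u‖ ≤ (R / ‖u‖) * ‖u‖ :=
        mul_le_mul_of_nonneg_right (min_le_right _ _) hu0.le
    _ = R := by field_simp

lemma lipschitzWith_radTrunc {R : ℝ} (hR : 0 ≤ R) : LipschitzWith 2 (radTrunc (X := X) R) := by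
  apply LipschitzWith.of_dist_le_mul
  intro u v
  rw [dist_eq_norm, dist_eq_norm, radTrunc, radTrunc]
  set a := min 1 (R / ‖u‖) with ha
  set b := min 1 (R / ‖v‖) with hb
  have hsplit : a • u - b • v = a • (u - v) + (a - b) • v := by module
  have ha0 : 0 ≤ a := le_min zero_le_one (div_nonneg hR (norm_nonneg u))
  have ha1 : a ≤ 1 := min_le_left _ _
  calc ‖a • u - b • v‖ ≤ ‖a • (u - v)‖ + ‖(a - b) • v‖ := by rw [hsplit]; exact norm_add_le _ _
    _ = |a| * ‖u - v‖ + |a - b| * ‖v‖ := by rw [norm_smul, norm_smul, Real.norm_eq_abs, Real.norm_eq_abs]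
    _ ≤ 1 * ‖u - v‖ + ‖u - v‖ :=
        add_le_add
          (mul_le_mul_of_nonneg_right (by rw [abs_of_nonneg ha0]; exact ha1) (norm_nonneg _))
          ((trunc_scalar hR (norm_nonneg u) (norm_nonneg v)).trans (abs_norm_sub_norm_le u v))
    _ ≤ 2 * ‖u - v‖ := by linarith [norm_nonneg (u - v)]

end helpers

section proj
variable {H : Type*} [NormedAddCommGroup H] [InnerProductSpace ℝ H] [CompleteSpace H]

lemma proj_norm_le {T : H →L[ℝ] H} (hT : IsSelfAdjoint T) (hidem : T.comp T = T) (x : H) :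
    ‖T x‖ ≤ ‖x‖ := by
  have hTT : T (T x) = T x := by
    conv_rhs => rw [← hidem]
    simp
  have h1 : ⟪T x, T x⟫ = ⟪x, T x⟫ := by
    have h := hT.isSymmetric x (T x)
    simp only [ContinuousLinearMap.coe_coe] at h
    rw [hTT] at h
    exact h
  have h2 : ‖T x‖ ^ 2 ≤ ‖x‖ * ‖T x‖ := by
    rw [← real_inner_self_eq_norm_sq, h1]
    exact real_inner_le_norm x (T x)
  nlinarith [norm_nonneg (T x), norm_nonneg x]

end proj

lemma gronwallBound_mono' {δ ε : ℝ} (hδ : 0 ≤ δ) (hε : 0 ≤ ε) {K : ℝ} (hK : 0 ≤ K)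
    {x y : ℝ} (hxy : x ≤ y) : gronwallBound δ K ε x ≤ gronwallBound δ K ε y := by
  rcases eq_or_ne K 0 with rfl | hK0
  · rw [gronwallBound_K0]
    exact add_le_add_right (mul_le_mul_of_nonneg_left hxy hε) δ
  · rw [gronwallBound_of_K_ne_0 hK0]
    have h1 : Real.exp (K * x) ≤ Real.exp (K * y) :=
      Real.exp_le_exp.mpr (mul_le_mul_of_nonneg_left hxy hK)
    have h2 : 0 ≤ ε / K := div_nonneg hε hK
    show δ * Real.exp (K * x) + ε / K * (Real.exp (K * x) - 1) ≤
      δ * Real.exp (K * y) + ε / K * (Real.exp (K * y) - 1)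
    gcongr


section odeHelpers
variable {X : Type*} [NormedAddCommGroup X] [NormedSpace ℝ X]

lemma ode_uniq (f : X → X)
    (hlip : ∀ M : ℝ, ∃ L : ℝ≥0, LipschitzOnWith L f (closedBall 0 M))
    {z₁ z₂ : ℝ → X} {b : ℝ}
    (h₁ : ∀ t ∈ Icc (0:ℝ) b, HasDerivAt z₁ (f (z₁ t)) t)
    (h₂ : ∀ t ∈ Icc (0:ℝ) b, HasDerivAt z₂ (f (z₂ t)) t)
    (h0 : z₁ 0 = z₂ 0) : EqOn z₁ z₂ (Icc 0 b) := by
  have hc₁ : ContinuousOn z₁ (Icc 0 b) := fun s hs => (h₁ s hs).continuousAt.continuousWithinAt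
  have hc₂ : ContinuousOn z₂ (Icc 0 b) := fun s hs => (h₂ s hs).continuousAt.continuousWithinAt
  obtain ⟨M₁, hM₁⟩ := isCompact_Icc.exists_bound_of_continuousOn hc₁
  obtain ⟨M₂, hM₂⟩ := isCompact_Icc.exists_bound_of_continuousOn hc₂
  obtain ⟨L, hL⟩ := hlip (max M₁ M₂)
  exact ODE_solution_unique_of_mem_Icc_right
    (v := fun _ => f) (s := fun _ => closedBall (0:X) (max M₁ M₂)) (fun _ _ => hL)
    hc₁ (fun s hs => (h₁ s (Ico_subset_Icc_self hs)).hasDerivWithinAt)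
    (fun s hs => mem_closedBall_zero_iff.mpr
      ((hM₁ s (Ico_subset_Icc_self hs)).trans (le_max_left _ _)))
    hc₂ (fun s hs => (h₂ s (Ico_subset_Icc_self hs)).hasDerivWithinAt)
    (fun s hs => mem_closedBall_zero_iff.mpr
      ((hM₂ s (Ico_subset_Icc_self hs)).trans (le_max_right _ _)))
    h0

lemma ode_exists [CompleteSpace X] (f : X → X) (K C₀ : ℝ) (hK : 0 ≤ K) (hC₀ : 0 ≤ C₀)
    (hbound : ∀ u, ‖f u‖ ≤ K * ‖u‖ + C₀)
    (hlip : ∀ M : ℝ, ∃ L : ℝ≥0, LipschitzOnWith L f (closedBall 0 M))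
    (u₀ : X) (T : ℝ) (hT : 1 ≤ T) :
    ∃ w : ℝ → X, w 0 = u₀ ∧ ∀ t ∈ Ico (0:ℝ) T, HasDerivAt w (f (w t)) t := by
  have hRu : ‖u₀‖ ≤ gronwallBound ‖u₀‖ K C₀ T := by
    have h := gronwallBound_mono' (δ := ‖u₀‖) (ε := C₀) (norm_nonneg u₀) hC₀ hK
      (show (0:ℝ) ≤ T by linarith)
    rwa [gronwallBound_x0] at h
  set R := gronwallBound ‖u₀‖ K C₀ T with hRdef
  have hR0 : 0 ≤ R := (norm_nonneg u₀).trans hRu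
  set fR := fun u => f (radTrunc R u) with hfRdef
  have hfRb : ∀ u, ‖fR u‖ ≤ K * R + C₀ := fun u => (hbound _).trans
    (add_le_add_left (mul_le_mul_of_nonneg_left (norm_radTrunc_le hR0 u) hK) _)
  have hfRb' : ∀ u, ‖fR u‖ ≤ K * ‖u‖ + C₀ := fun u => (hbound _).trans
    (add_le_add_left (mul_le_mul_of_nonneg_left (norm_radTrunc_le_self hR0 u) hK) _)
  obtain ⟨L₀, hL₀⟩ := hlip R
  have hfRlip : LipschitzWith (2 * L₀) fR := by
    apply LipschitzWith.of_dist_le_mul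
    intro u v
    have hmem : ∀ u : X, radTrunc R u ∈ closedBall (0:X) R := fun u =>
      mem_closedBall_zero_iff.mpr (norm_radTrunc_le hR0 u)
    calc dist (fR u) (fR v) ≤ L₀ * dist (radTrunc R u) (radTrunc R v) :=
          lipschitzOnWith_iff_dist_le_mul.mp hL₀ _ (hmem u) _ (hmem v)
      _ ≤ L₀ * (2 * dist u v) := by
          gcongr
          exact (lipschitzWith_radTrunc hR0).dist_le_mul u v
      _ = (2 * L₀ : ℝ≥0) * dist u v := by push_cast; ring
  set C := K * R + C₀ with hCdef
  have hC0 : 0 ≤ C := by positivity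
  have hT0 : (0:ℝ) ≤ T := by linarith
  have hpl : IsPicardLindelof (fun _ => fR) (tmin := -1) (tmax := T)
      ⟨0, by constructor <;> linarith⟩ u₀ ⟨C * T, mul_nonneg hC0 hT0⟩ 0 ⟨C, hC0⟩ (2 * L₀) :=
    IsPicardLindelof.of_time_independent (fun x _ => hfRb x) hfRlip.lipschitzOnWith (by
        show C * max (T - 0) (0 - (-1)) ≤ C * T - 0
        have hmax : max (T - 0) (0 - (-1)) = T := by
          rw [sub_zero, zero_sub, neg_neg]
          exact max_eq_left hT
        rw [hmax, sub_zero])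
  obtain ⟨w, hw0, hw⟩ := hpl.exists_eq_forall_mem_Icc_hasDerivWithinAt₀
  replace hw0 : w 0 = u₀ := hw0
  have hD : ∀ t ∈ Ico (0:ℝ) T, HasDerivAt w (fR (w t)) t := by
    intro t ht
    exact (hw t ⟨by linarith [ht.1], ht.2.le⟩).hasDerivAt
      (Icc_mem_nhds (by linarith [ht.1]) ht.2)
  have hcont : ContinuousOn w (Icc 0 T) := fun t ht =>
    ((hw t ⟨by linarith [ht.1], ht.2⟩).continuousWithinAt).mono
      (Icc_subset_Icc (by norm_num) le_rfl)
  have hgb : ∀ t ∈ Icc (0:ℝ) T, ‖w t‖ ≤ R := by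
    intro t ht
    have h := norm_le_gronwallBound_of_norm_deriv_right_le (f := w)
      (f' := fun s => fR (w s)) (δ := ‖u₀‖) (K := K) (ε := C₀) (a := 0) (b := T)
      hcont (fun s hs => (hD s hs).hasDerivWithinAt) (by rw [hw0])
      (fun s _ => hfRb' (w s)) t ht
    rw [sub_zero] at h
    exact h.trans (gronwallBound_mono' (norm_nonneg u₀) hC₀ hK ht.2)
  refine ⟨w, hw0, fun t ht => ?_⟩
  have h := hD t ht
  have h2 : fR (w t) = f (w t) :=
    congrArg f (radTrunc_eq_self (hgb t (Ico_subset_Icc_self ht)))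
  rwa [h2] at h

end odeHelpers

/-- Let `H` be a Hilbert space and `E : H → ℝ` a C² function whose gradient
`u ↦ ∇E(u)` (the Riesz representative of `E'(u)`, i.e. `E'(u)h = ⟨h, ∇E(u)⟩_H`) is Lipschitz,
and let `u ↦ P_u` be a Lipschitz map (in operator norm) into the bounded operators on `H`,
each `P_u` an orthogonal projection (self-adjoint and idempotent). If `E` is bounded below,
then for every `u₀ ∈ H` the initial value problem
`z(0) = u₀`, `z'(t) = −P_{z(t)} ∇E(z(t))`
has a solution defined for all `t ≥ 0`, unique on `[0,∞)`. -/
theorem steepest_descent_global_existence_uniqueness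
    {H : Type*} [NormedAddCommGroup H] [InnerProductSpace ℝ H] [CompleteSpace H]
    (E : H → ℝ) (hE : ContDiff ℝ 2 E)
    (gradE : H → H)
    (hgrad : ∀ u : H, HasFDerivAt E (innerSL ℝ (gradE u)) u)
    (hgradLip : ∃ K : NNReal, LipschitzWith K gradE)
    (P : H → (H →L[ℝ] H))
    (hPLip : ∃ K' : NNReal, LipschitzWith K' P)
    (hPproj : ∀ u : H, IsSelfAdjoint (P u) ∧ (P u).comp (P u) = P u)
    (hEbdd : BddBelow (Set.range E))
    (u₀ : H) :
    (∃ z : ℝ → H, z 0 = u₀ ∧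
        ∀ t : ℝ, 0 ≤ t → HasDerivAt z (-(P (z t) (gradE (z t)))) t) ∧
    (∀ z₁ z₂ : ℝ → H,
        (z₁ 0 = u₀ ∧ ∀ t : ℝ, 0 ≤ t → HasDerivAt z₁ (-(P (z₁ t) (gradE (z₁ t)))) t) →
        (z₂ 0 = u₀ ∧ ∀ t : ℝ, 0 ≤ t → HasDerivAt z₂ (-(P (z₂ t) (gradE (z₂ t)))) t) →
        ∀ t : ℝ, 0 ≤ t → z₁ t = z₂ t) := by
  obtain ⟨K, hK⟩ := hgradLip
  obtain ⟨K', hK'⟩ := hPLip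
  have hPnorm : ∀ u x : H, ‖P u x‖ ≤ ‖x‖ := fun u x =>
    proj_norm_le (hPproj u).1 (hPproj u).2 x
  have hgbound : ∀ u : H, ‖gradE u‖ ≤ (K:ℝ) * ‖u‖ + ‖gradE 0‖ := by
    intro u
    have h := hK.dist_le_mul u 0
    rw [dist_eq_norm, dist_zero_right] at h
    have h2 := norm_sub_norm_le (gradE u) (gradE 0)
    linarith
  have hbound : ∀ u : H, ‖-(P u (gradE u))‖ ≤ (K:ℝ) * ‖u‖ + ‖gradE 0‖ := fun u => by
    rw [norm_neg]; exact (hPnorm u _).trans (hgbound u)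
  have hlip : ∀ M : ℝ, ∃ L : ℝ≥0,
      LipschitzOnWith L (fun u => -(P u (gradE u))) (closedBall (0:H) M) := by
    intro M
    set M' := max M 0 with hM'
    have hM'0 : (0:ℝ) ≤ M' := le_max_right _ _
    refine ⟨((K:ℝ) + (K':ℝ) * ((K:ℝ) * M' + ‖gradE 0‖)).toNNReal, ?_⟩
    rw [lipschitzOnWith_iff_dist_le_mul]
    intro u hu v hv
    rw [mem_closedBall_zero_iff] at hu hv
    have hu' : ‖u‖ ≤ M' := hu.trans (le_max_left _ _)
    have hgu : ‖gradE u‖ ≤ (K:ℝ) * M' + ‖gradE 0‖ :=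
      (hgbound u).trans (add_le_add_left
        (mul_le_mul_of_nonneg_left hu' K.coe_nonneg) _)
    rw [dist_eq_norm, dist_eq_norm]
    have hsplit : -(P u (gradE u)) - -(P v (gradE v))
        = P v (gradE v - gradE u) + (P v - P u) (gradE u) := by
      rw [map_sub, ContinuousLinearMap.sub_apply]; abel
    have hg : ‖gradE v - gradE u‖ ≤ (K:ℝ) * ‖u - v‖ := by
      have h := hK.dist_le_mul v u
      rw [dist_eq_norm, dist_eq_norm] at h
      rwa [norm_sub_rev v u] at h
    have hp : ‖P v - P u‖ ≤ (K':ℝ) * ‖u - v‖ := by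
      have h := hK'.dist_le_mul v u
      rw [dist_eq_norm, dist_eq_norm] at h
      rwa [norm_sub_rev v u] at h
    calc ‖-(P u (gradE u)) - -(P v (gradE v))‖
        = ‖P v (gradE v - gradE u) + (P v - P u) (gradE u)‖ := by rw [hsplit]
      _ ≤ ‖P v (gradE v - gradE u)‖ + ‖(P v - P u) (gradE u)‖ := norm_add_le _ _
      _ ≤ ‖gradE v - gradE u‖ + ‖P v - P u‖ * ‖gradE u‖ :=
          add_le_add (hPnorm v _) ((P v - P u).le_opNorm _)
      _ ≤ (K:ℝ) * ‖u - v‖ + ((K':ℝ) * ‖u - v‖) * ((K:ℝ) * M' + ‖gradE 0‖) :=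
          add_le_add hg (mul_le_mul hp hgu (norm_nonneg _) (by positivity))
      _ = ((K:ℝ) + (K':ℝ) * ((K:ℝ) * M' + ‖gradE 0‖)) * ‖u - v‖ := by ring
      _ = (((K:ℝ) + (K':ℝ) * ((K:ℝ) * M' + ‖gradE 0‖)).toNNReal : ℝ) * ‖u - v‖ := by
          rw [Real.coe_toNNReal _ (by positivity)]
  constructor
  · -- existence
    choose w hw0 hwD using fun n : ℕ =>
      ode_exists (fun u => -(P u (gradE u))) (K:ℝ) ‖gradE 0‖ K.coe_nonneg (norm_nonneg _)
        hbound hlip u₀ ((n:ℝ) + 1) (le_add_of_nonneg_left (Nat.cast_nonneg n))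
    have agree : ∀ m n : ℕ, ∀ s : ℝ, 0 ≤ s → s < (m:ℝ) + 1 → s < (n:ℝ) + 1 →
        w m s = w n s := by
      intro m n s hs hsm hsn
      exact ode_uniq (fun u => -(P u (gradE u))) hlip
        (fun τ hτ => hwD m τ ⟨hτ.1, lt_of_le_of_lt hτ.2 hsm⟩)
        (fun τ hτ => hwD n τ ⟨hτ.1, lt_of_le_of_lt hτ.2 hsn⟩)
        ((hw0 m).trans (hw0 n).symm) ⟨hs, le_rfl⟩
    refine ⟨fun s => w ⌈s⌉₊ s, ?_, ?_⟩
    · show w ⌈(0:ℝ)⌉₊ 0 = u₀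
      rw [Nat.ceil_zero]; exact hw0 0
    · intro t ht
      set n := ⌈t⌉₊ with hn
      have htn : t < (n:ℝ) + 1 := by
        have := Nat.le_ceil t
        rw [← hn] at this; linarith
      have hder := hwD n t ⟨ht, htn⟩
      have heq : (fun s => w ⌈s⌉₊ s) =ᶠ[nhds t] w n := by
        rcases ht.eq_or_lt with h0 | h0
        · have hn0 : n = 0 := by rw [hn, ← h0, Nat.ceil_zero]
          refine Filter.eventuallyEq_of_mem
            (Ioo_mem_nhds (show t - 1 < t by linarith) (show t < t + 1 by linarith)) ?_
          intro s hs
          show w ⌈s⌉₊ s = w n s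
          rcases le_or_gt s 0 with hs0 | hs0
          · rw [Nat.ceil_eq_zero.mpr hs0, hn0]
          · have h1 : s < (⌈s⌉₊ : ℝ) + 1 := by linarith [Nat.le_ceil s]
            have h2 : s < ((0:ℕ):ℝ) + 1 := by push_cast; linarith [hs.2, h0]
            rw [hn0]
            exact agree ⌈s⌉₊ 0 s hs0.le h1 h2
        · refine Filter.eventuallyEq_of_mem (Ioo_mem_nhds h0 htn) ?_
          intro s hs
          show w ⌈s⌉₊ s = w n s
          have h1 : s < (⌈s⌉₊ : ℝ) + 1 := by linarith [Nat.le_ceil s]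
          exact agree ⌈s⌉₊ n s hs.1.le h1 hs.2
      have hZ : HasDerivAt (fun s => w ⌈s⌉₊ s) (-(P (w n t) (gradE (w n t)))) t :=
        hder.congr_of_eventuallyEq heq
      have hZt : w ⌈t⌉₊ t = w n t := by rw [← hn]
      show HasDerivAt (fun s => w ⌈s⌉₊ s)
        (-(P (w ⌈t⌉₊ t) (gradE (w ⌈t⌉₊ t)))) t
      rw [hZt]
      exact hZ
  · -- uniqueness
    rintro z₁ z₂ ⟨h10, h1d⟩ ⟨h20, h2d⟩ t ht
    exact ode_uniq (fun u => -(P u (gradE u))) hlip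
      (fun τ hτ => h1d τ hτ.1) (fun τ hτ => h2d τ hτ.1)
      (h10.trans h20.symm) ⟨ht, le_rfl⟩
end
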